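/- Let A be the Liu-Schulz algebra: the k-algebra generated by x₀, x₁, x₂ subject to xᵢ² = 0 and x_{i+1}x_i + q·xᵢx_{i+1} = 0 for i = 0,1,2 (indices mod 3), where q ∈ k is nonzero and not a root of unity. Then A is an 8-dimensional local symmetric algebra with k-basis {1, x₀, x₁, x₂, x₀x₁, x₁x₂, x₀x₂, x₀x₁x₂}. -/

import Mathlib

universe u

/-- The defining relations of the Liu-Schulz algebra: `xᵢ² = 0` and
`x_{i+1} xᵢ + q · xᵢ x_{i+1} = 0` for `i = 0, 1, 2` (indices mod 3). -/
inductive LiuSchulzRel (k : Type u) [Field k] (q : k) :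
    FreeAlgebra k (Fin 3) → FreeAlgebra k (Fin 3) → Prop
  | sq (i : Fin 3) : LiuSchulzRel k q (FreeAlgebra.ι k i * FreeAlgebra.ι k i) 0
  | comm (i : Fin 3) : LiuSchulzRel k q
      (FreeAlgebra.ι k (i + 1) * FreeAlgebra.ι k i
        + q • (FreeAlgebra.ι k i * FreeAlgebra.ι k (i + 1))) 0

/-- The Liu-Schulz algebra over `k` with parameter `q`. -/
abbrev LiuSchulzAlgebra (k : Type u) [Field k] (q : k) : Type u :=
  RingQuot (LiuSchulzRel k q)

/-- The images of the generators `x₀, x₁, x₂` in the Liu-Schulz algebra. -/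
noncomputable def LiuSchulzX (k : Type u) [Field k] (q : k) (i : Fin 3) :
    LiuSchulzAlgebra k q :=
  RingQuot.mkAlgHom k (LiuSchulzRel k q) (FreeAlgebra.ι k i)

namespace LiuSchulzAux


variable {k : Type u} [Field k]

/-- Structure-constant multiplication for the 8-dimensional model of the Liu-Schulz algebra.
Coordinates: 0 ↦ 1, 1 ↦ x₀, 2 ↦ x₁, 3 ↦ x₂, 4 ↦ x₀x₁, 5 ↦ x₁x₂, 6 ↦ x₀x₂, 7 ↦ x₀x₁x₂. -/
def lsMul (q : k) (a b : Fin 8 → k) : Fin 8 → k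
  | ⟨0, _⟩ => a 0 * b 0
  | ⟨1, _⟩ => a 0 * b 1 + a 1 * b 0
  | ⟨2, _⟩ => a 0 * b 2 + a 2 * b 0
  | ⟨3, _⟩ => a 0 * b 3 + a 3 * b 0
  | ⟨4, _⟩ => a 0 * b 4 + a 4 * b 0 + a 1 * b 2 - q * (a 2 * b 1)
  | ⟨5, _⟩ => a 0 * b 5 + a 5 * b 0 + a 2 * b 3 - q * (a 3 * b 2)
  | ⟨6, _⟩ => a 0 * b 6 + a 6 * b 0 + a 1 * b 3 - q⁻¹ * (a 3 * b 1)
  | ⟨7, _⟩ => a 0 * b 7 + a 7 * b 0 + a 1 * b 5 + (q * q⁻¹) * (a 5 * b 1)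
       - q * (a 2 * b 6) - q * (a 6 * b 2) + a 4 * b 3 + (q⁻¹ * q) * (a 3 * b 4)

variable {q : k}

lemma ls0 (a b : Fin 8 → k) : lsMul q a b 0 = a 0 * b 0 := rfl
lemma ls1 (a b : Fin 8 → k) : lsMul q a b 1 = a 0 * b 1 + a 1 * b 0 := rfl
lemma ls2 (a b : Fin 8 → k) : lsMul q a b 2 = a 0 * b 2 + a 2 * b 0 := rfl
lemma ls3 (a b : Fin 8 → k) : lsMul q a b 3 = a 0 * b 3 + a 3 * b 0 := rfl
lemma ls4 (a b : Fin 8 → k) :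
    lsMul q a b 4 = a 0 * b 4 + a 4 * b 0 + a 1 * b 2 - q * (a 2 * b 1) := rfl
lemma ls5 (a b : Fin 8 → k) :
    lsMul q a b 5 = a 0 * b 5 + a 5 * b 0 + a 2 * b 3 - q * (a 3 * b 2) := rfl
lemma ls6 (a b : Fin 8 → k) :
    lsMul q a b 6 = a 0 * b 6 + a 6 * b 0 + a 1 * b 3 - q⁻¹ * (a 3 * b 1) := rfl
lemma ls7 (a b : Fin 8 → k) :
    lsMul q a b 7 = a 0 * b 7 + a 7 * b 0 + a 1 * b 5 + (q * q⁻¹) * (a 5 * b 1)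
       - q * (a 2 * b 6) - q * (a 6 * b 2) + a 4 * b 3 + (q⁻¹ * q) * (a 3 * b 4) := rfl

lemma lsext (a b : Fin 8 → k) (h : ∀ i : Fin 8, a i = b i) : a = b := funext h

lemma fin8cases (P : Fin 8 → Prop) (h0 : P 0) (h1 : P 1) (h2 : P 2) (h3 : P 3)
    (h4 : P 4) (h5 : P 5) (h6 : P 6) (h7 : P 7) : ∀ i, P i := by
  intro i
  match i with
  | 0 => exact h0
  | 1 => exact h1
  | 2 => exact h2
  | 3 => exact h3
  | 4 => exact h4
  | 5 => exact h5
  | 6 => exact h6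
  | 7 => exact h7

lemma fin3cases (P : Fin 3 → Prop) (h0 : P 0) (h1 : P 1) (h2 : P 2) : ∀ i, P i := by
  intro i
  match i with
  | 0 => exact h0
  | 1 => exact h1
  | 2 => exact h2

lemma lsMul_assoc (a b c : Fin 8 → k) :
    lsMul q (lsMul q a b) c = lsMul q a (lsMul q b c) := by
  refine lsext _ _ (fin8cases _ ?_ ?_ ?_ ?_ ?_ ?_ ?_ ?_) <;>
    simp only [ls0, ls1, ls2, ls3, ls4, ls5, ls6, ls7] <;> ring

lemma lsMul_add_left (a b c : Fin 8 → k) :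
    lsMul q (a + b) c = lsMul q a c + lsMul q b c := by
  refine lsext _ _ (fin8cases _ ?_ ?_ ?_ ?_ ?_ ?_ ?_ ?_) <;>
    simp only [ls0, ls1, ls2, ls3, ls4, ls5, ls6, ls7, Pi.add_apply] <;> ring

lemma lsMul_add_right (a b c : Fin 8 → k) :
    lsMul q a (b + c) = lsMul q a b + lsMul q a c := by
  refine lsext _ _ (fin8cases _ ?_ ?_ ?_ ?_ ?_ ?_ ?_ ?_) <;>
    simp only [ls0, ls1, ls2, ls3, ls4, ls5, ls6, ls7, Pi.add_apply] <;> ring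

def lsOne : Fin 8 → k := fun i => if i = 0 then 1 else 0

lemma lsOne_apply (i : Fin 8) : (lsOne : Fin 8 → k) i = if i = 0 then 1 else 0 := rfl

lemma lsMul_one_left (a : Fin 8 → k) : lsMul q lsOne a = a := by
  refine lsext _ _ (fin8cases _ ?_ ?_ ?_ ?_ ?_ ?_ ?_ ?_) <;>
    simp [ls0, ls1, ls2, ls3, ls4, ls5, ls6, ls7, lsOne]

lemma lsMul_one_right (a : Fin 8 → k) : lsMul q a lsOne = a := by
  refine lsext _ _ (fin8cases _ ?_ ?_ ?_ ?_ ?_ ?_ ?_ ?_) <;>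
    simp [ls0, ls1, ls2, ls3, ls4, ls5, ls6, ls7, lsOne]

lemma lsMul_zero_left (a : Fin 8 → k) : lsMul q 0 a = 0 := by
  refine lsext _ _ (fin8cases _ ?_ ?_ ?_ ?_ ?_ ?_ ?_ ?_) <;>
    simp [ls0, ls1, ls2, ls3, ls4, ls5, ls6, ls7]

lemma lsMul_zero_right (a : Fin 8 → k) : lsMul q a 0 = 0 := by
  refine lsext _ _ (fin8cases _ ?_ ?_ ?_ ?_ ?_ ?_ ?_ ?_) <;>
    simp [ls0, ls1, ls2, ls3, ls4, ls5, ls6, ls7]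

lemma lsMul_smul_left (c : k) (a b : Fin 8 → k) :
    lsMul q (c • a) b = c • lsMul q a b := by
  refine lsext _ _ (fin8cases _ ?_ ?_ ?_ ?_ ?_ ?_ ?_ ?_) <;>
    simp only [ls0, ls1, ls2, ls3, ls4, ls5, ls6, ls7, Pi.smul_apply, smul_eq_mul] <;> ring

lemma lsMul_smul_right (c : k) (a b : Fin 8 → k) :
    lsMul q a (c • b) = c • lsMul q a b := by
  refine lsext _ _ (fin8cases _ ?_ ?_ ?_ ?_ ?_ ?_ ?_ ?_) <;>
    simp only [ls0, ls1, ls2, ls3, ls4, ls5, ls6, ls7, Pi.smul_apply, smul_eq_mul] <;> ring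

/-- The 8-dimensional model algebra, as a type synonym. -/
def LS8 (k : Type u) [Field k] (q : k) : Type u := Fin 8 → k

instance : AddCommGroup (LS8 k q) := Pi.addCommGroup
instance : Module k (LS8 k q) := Pi.module _ _ _

instance : Ring (LS8 k q) :=
  { (Pi.addCommGroup : AddCommGroup (LS8 k q)) with
    mul := lsMul q
    one := lsOne
    left_distrib := lsMul_add_right
    right_distrib := fun a b c => lsMul_add_left a b c
    zero_mul := lsMul_zero_left
    mul_zero := lsMul_zero_right
    mul_assoc := lsMul_assoc
    one_mul := lsMul_one_left
    mul_one := lsMul_one_right }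

instance : Algebra k (LS8 k q) :=
  Algebra.ofModule (fun c a b => lsMul_smul_left c a b) (fun c a b => lsMul_smul_right c a b)

-- basic apply lemmas at the LS8 level
lemma mul_def (a b : LS8 k q) : a * b = lsMul q a b := rfl
lemma one_def : (1 : LS8 k q) = lsOne := rfl
lemma add_apply (a b : LS8 k q) (i : Fin 8) : (a + b) i = a i + b i := rfl
lemma smul_apply (c : k) (a : LS8 k q) (i : Fin 8) : (c • a) i = c * a i := rfl
lemma zero_apply (i : Fin 8) : (0 : LS8 k q) i = 0 := rfl
lemma neg_apply (a : LS8 k q) (i : Fin 8) : (-a) i = -(a i) := rfl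
lemma one_apply (i : Fin 8) : (1 : LS8 k q) i = if i = 0 then 1 else 0 := rfl
lemma mul0 (a b : LS8 k q) : (a * b) 0 = a 0 * b 0 := rfl
lemma mul1 (a b : LS8 k q) : (a * b) 1 = a 0 * b 1 + a 1 * b 0 := rfl
lemma mul2 (a b : LS8 k q) : (a * b) 2 = a 0 * b 2 + a 2 * b 0 := rfl
lemma mul3 (a b : LS8 k q) : (a * b) 3 = a 0 * b 3 + a 3 * b 0 := rfl
lemma mul4 (a b : LS8 k q) :
    (a * b) 4 = a 0 * b 4 + a 4 * b 0 + a 1 * b 2 - q * (a 2 * b 1) := rfl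
lemma mul5 (a b : LS8 k q) :
    (a * b) 5 = a 0 * b 5 + a 5 * b 0 + a 2 * b 3 - q * (a 3 * b 2) := rfl
lemma mul6 (a b : LS8 k q) :
    (a * b) 6 = a 0 * b 6 + a 6 * b 0 + a 1 * b 3 - q⁻¹ * (a 3 * b 1) := rfl
lemma mul7 (a b : LS8 k q) :
    (a * b) 7 = a 0 * b 7 + a 7 * b 0 + a 1 * b 5 + (q * q⁻¹) * (a 5 * b 1)
       - q * (a 2 * b 6) - q * (a 6 * b 2) + a 4 * b 3 + (q⁻¹ * q) * (a 3 * b 4) := rfl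


end LiuSchulzAux

namespace LiuSchulzAux

variable {k : Type u} [Field k] {q : k}

/-- standard basis vector of the model -/
def eL (q : k) (s : Fin 8) : LS8 k q := fun i => if i = s then 1 else 0

lemma eL_apply (s i : Fin 8) : eL q s i = if i = s then 1 else 0 := rfl

/-- generators in the model -/
def gen (q : k) (j : Fin 3) : LS8 k q := eL q ⟨j.val + 1, by omega⟩

noncomputable def F (q : k) : FreeAlgebra k (Fin 3) →ₐ[k] LS8 k q :=
  FreeAlgebra.lift k (gen q)

lemma F_ι (j : Fin 3) : F q (FreeAlgebra.ι k j) = gen q j := by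
  simp [F]

lemma hrel (hq : q ≠ 0) : ∀ ⦃x y : FreeAlgebra k (Fin 3)⦄, LiuSchulzRel k q x y →
    F q x = F q y := by
  intro x y h
  cases h with
  | sq i =>
    simp only [map_mul, map_zero, F_ι]
    fin_cases i <;>
    · refine lsext _ _ (fin8cases _ ?_ ?_ ?_ ?_ ?_ ?_ ?_ ?_) <;>
        simp [mul0, mul1, mul2, mul3, mul4, mul5, mul6, mul7, gen, eL, zero_apply]
  | comm i =>
    simp only [map_add, map_mul, map_smul, map_zero, F_ι]
    fin_cases i <;>
    · refine lsext _ _ (fin8cases _ ?_ ?_ ?_ ?_ ?_ ?_ ?_ ?_) <;>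
        simp [add_apply, smul_apply, mul0, mul1, mul2, mul3, mul4, mul5, mul6, mul7,
          gen, eL, zero_apply] <;>
        (ring_nf; simp [mul_inv_cancel₀ hq])

noncomputable def φ (q : k) (hq : q ≠ 0) : LiuSchulzAlgebra k q →ₐ[k] LS8 k q :=
  RingQuot.liftAlgHom k ⟨F q, hrel hq⟩

lemma φ_x (hq : q ≠ 0) (j : Fin 3) : φ q hq (LiuSchulzX k q j) = gen q j := by
  rw [LiuSchulzX, φ, RingQuot.liftAlgHom_mkAlgHom_apply, F_ι]

end LiuSchulzAux

namespace LiuSchulzAux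

variable {k : Type u} [Field k] {q : k}

lemma rel_eq {a b : FreeAlgebra k (Fin 3)} (h : LiuSchulzRel k q a b) :
    RingQuot.mkAlgHom k (LiuSchulzRel k q) a = RingQuot.mkAlgHom k (LiuSchulzRel k q) b :=
  RingQuot.mkAlgHom_rel k h

section rels

local notation "X" => LiuSchulzX k q

lemma xsq (i : Fin 3) : X i * X i = 0 := by
  have := rel_eq (LiuSchulzRel.sq (k := k) (q := q) i)
  simpa [LiuSchulzX] using this

lemma xcomm (i : Fin 3) : X (i + 1) * X i + q • (X i * X (i + 1)) = 0 := by
  have := rel_eq (LiuSchulzRel.comm (k := k) (q := q) i)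
  simpa [LiuSchulzX] using this

lemma h10 : X 1 * X 0 = (-q) • (X 0 * X 1) := by
  have h := xcomm (q := q) 0
  rw [zero_add] at h
  exact (eq_neg_of_add_eq_zero_left h).trans (neg_smul q _).symm

lemma h21 : X 2 * X 1 = (-q) • (X 1 * X 2) := by
  have h := xcomm (q := q) 1
  rw [show (1 + 1 : Fin 3) = 2 from rfl] at h
  exact (eq_neg_of_add_eq_zero_left h).trans (neg_smul q _).symm

lemma h02 : X 0 * X 2 = (-q) • (X 2 * X 0) := by
  have h := xcomm (q := q) 2
  rw [show (2 + 1 : Fin 3) = 0 from rfl] at h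
  exact (eq_neg_of_add_eq_zero_left h).trans (neg_smul q _).symm

lemma h20 (hq : q ≠ 0) : X 2 * X 0 = (-q⁻¹) • (X 0 * X 2) := by
  rw [h02, smul_smul, show -q⁻¹ * -q = 1 by rw [neg_mul_neg, inv_mul_cancel₀ hq], one_smul]

lemma xsq' (i : Fin 3) (z : LiuSchulzAlgebra k q) : X i * (X i * z) = 0 := by
  rw [← mul_assoc, xsq, zero_mul]

lemma h10' (z : LiuSchulzAlgebra k q) : X 1 * (X 0 * z) = (-q) • (X 0 * (X 1 * z)) := by
  rw [← mul_assoc, h10, smul_mul_assoc, mul_assoc]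

lemma h21' (z : LiuSchulzAlgebra k q) : X 2 * (X 1 * z) = (-q) • (X 1 * (X 2 * z)) := by
  rw [← mul_assoc, h21, smul_mul_assoc, mul_assoc]

lemma h20' (hq : q ≠ 0) (z : LiuSchulzAlgebra k q) :
    X 2 * (X 0 * z) = (-q⁻¹) • (X 0 * (X 2 * z)) := by
  rw [← mul_assoc, h20 hq, smul_mul_assoc, mul_assoc]

end rels

/-- monomial basis of the Liu-Schulz algebra -/
noncomputable def mA (q : k) : Fin 8 → LiuSchulzAlgebra k q
  | ⟨0, _⟩ => 1
  | ⟨1, _⟩ => LiuSchulzX k q 0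
  | ⟨2, _⟩ => LiuSchulzX k q 1
  | ⟨3, _⟩ => LiuSchulzX k q 2
  | ⟨4, _⟩ => LiuSchulzX k q 0 * LiuSchulzX k q 1
  | ⟨5, _⟩ => LiuSchulzX k q 1 * LiuSchulzX k q 2
  | ⟨6, _⟩ => LiuSchulzX k q 0 * LiuSchulzX k q 2
  | ⟨7, _⟩ => LiuSchulzX k q 0 * LiuSchulzX k q 1 * LiuSchulzX k q 2

section span
local notation "X" => LiuSchulzX k q

lemma span_m_top (hq : q ≠ 0) : Submodule.span k (Set.range (mA q)) = ⊤ := by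
  set p : Submodule k (LiuSchulzAlgebra k q) := Submodule.span k (Set.range (mA q)) with hp
  have hmem : ∀ l : Fin 8, mA q l ∈ p := fun l => Submodule.subset_span ⟨l, rfl⟩
  have e0 : (1 : LiuSchulzAlgebra k q) ∈ p := hmem 0
  have e1 : X 0 ∈ p := hmem 1
  have e2 : X 1 ∈ p := hmem 2
  have e3 : X 2 ∈ p := hmem 3
  have e4 : X 0 * X 1 ∈ p := hmem 4
  have e5 : X 1 * X 2 ∈ p := hmem 5
  have e6 : X 0 * X 2 ∈ p := hmem 6
  have e7 : X 0 * (X 1 * X 2) ∈ p := by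
    have := hmem 7
    rwa [show mA q 7 = X 0 * X 1 * X 2 from rfl, mul_assoc] at this
  have key0 : ∀ (l : Fin 8) (j : Fin 3), mA q l * X j ∈ p := by
    refine fin8cases _ ?_ ?_ ?_ ?_ ?_ ?_ ?_ ?_ <;>
      refine fin3cases _ ?_ ?_ ?_ <;>
        simp only [show mA q 0 = 1 from rfl, show mA q 1 = X 0 from rfl,
          show mA q 2 = X 1 from rfl, show mA q 3 = X 2 from rfl,
          show mA q 4 = X 0 * X 1 from rfl, show mA q 5 = X 1 * X 2 from rfl,
          show mA q 6 = X 0 * X 2 from rfl, show mA q 7 = X 0 * X 1 * X 2 from rfl,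
          one_mul, mul_assoc, xsq, xsq', h10, h10', h21, h21',
          h20 hq, h20' hq, mul_smul_comm, smul_mul_assoc, smul_smul,
          mul_zero, zero_mul, smul_zero, one_smul, mul_one] <;>
        first
          | exact Submodule.zero_mem p
          | exact e1 | exact e2 | exact e3 | exact e4 | exact e5 | exact e6 | exact e7
          | exact Submodule.smul_mem p _ e4
          | exact Submodule.smul_mem p _ e5
          | exact Submodule.smul_mem p _ e6
          | exact Submodule.smul_mem p _ e7
  have key : ∀ (j : Fin 3) (a : LiuSchulzAlgebra k q), a ∈ p → a * X j ∈ p := by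
    intro j a ha
    have hle : p ≤ p.comap (LinearMap.mulRight k (X j)) := by
      rw [hp, Submodule.span_le]
      rintro v ⟨l, rfl⟩
      exact key0 l j
    exact hle ha
  have main : ∀ f : FreeAlgebra k (Fin 3), ∀ a ∈ p,
      a * (RingQuot.mkAlgHom k (LiuSchulzRel k q) f) ∈ p := by
    intro f
    induction f using FreeAlgebra.induction with
    | grade0 r =>
      intro a ha
      rw [AlgHom.commutes, ← Algebra.commutes, ← Algebra.smul_def]
      exact Submodule.smul_mem p r ha
    | grade1 j =>
      intro a ha
      exact key j a ha
    | mul f g hf hg =>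
      intro a ha
      rw [map_mul, ← mul_assoc]
      exact hg _ (hf _ ha)
    | add f g hf hg =>
      intro a ha
      rw [map_add, mul_add]
      exact Submodule.add_mem p (hf _ ha) (hg _ ha)
  rw [eq_top_iff]
  intro a _
  obtain ⟨f, rfl⟩ := RingQuot.mkAlgHom_surjective k (LiuSchulzRel k q) a
  simpa using main f 1 e0

end span

end LiuSchulzAux

namespace LiuSchulzAux

variable {k : Type u} [Field k] {q : k}

-- LS8: more coordinate lemmas
lemma sub_apply (a b : LS8 k q) (i : Fin 8) : (a - b) i = a i - b i := rfl

-- products of basis vectors needed for φ on monomials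
lemma e12 : eL q 1 * eL q 2 = eL q 4 := by
  refine lsext _ _ (fin8cases _ ?_ ?_ ?_ ?_ ?_ ?_ ?_ ?_) <;>
    simp [mul0, mul1, mul2, mul3, mul4, mul5, mul6, mul7, eL]
lemma e23 : eL q 2 * eL q 3 = eL q 5 := by
  refine lsext _ _ (fin8cases _ ?_ ?_ ?_ ?_ ?_ ?_ ?_ ?_) <;>
    simp [mul0, mul1, mul2, mul3, mul4, mul5, mul6, mul7, eL]
lemma e13 : eL q 1 * eL q 3 = eL q 6 := by
  refine lsext _ _ (fin8cases _ ?_ ?_ ?_ ?_ ?_ ?_ ?_ ?_) <;>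
    simp [mul0, mul1, mul2, mul3, mul4, mul5, mul6, mul7, eL]
lemma e43 : eL q 4 * eL q 3 = eL q 7 := by
  refine lsext _ _ (fin8cases _ ?_ ?_ ?_ ?_ ?_ ?_ ?_ ?_) <;>
    simp [mul0, mul1, mul2, mul3, mul4, mul5, mul6, mul7, eL]

lemma φ_m (hq : q ≠ 0) : ∀ i : Fin 8, φ q hq (mA q i) = eL q i := by
  refine fin8cases _ ?_ ?_ ?_ ?_ ?_ ?_ ?_ ?_
  · rw [show mA q 0 = 1 from rfl, map_one]; rfl
  · rw [show mA q 1 = LiuSchulzX k q 0 from rfl, φ_x hq 0]; rfl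
  · rw [show mA q 2 = LiuSchulzX k q 1 from rfl, φ_x hq 1]; rfl
  · rw [show mA q 3 = LiuSchulzX k q 2 from rfl, φ_x hq 2]; rfl
  · rw [show mA q 4 = LiuSchulzX k q 0 * LiuSchulzX k q 1 from rfl, map_mul,
      φ_x hq 0, φ_x hq 1]
    exact e12
  · rw [show mA q 5 = LiuSchulzX k q 1 * LiuSchulzX k q 2 from rfl, map_mul,
      φ_x hq 1, φ_x hq 2]
    exact e23
  · rw [show mA q 6 = LiuSchulzX k q 0 * LiuSchulzX k q 2 from rfl, map_mul,
      φ_x hq 0, φ_x hq 2]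
    exact e13
  · rw [show mA q 7 = LiuSchulzX k q 0 * LiuSchulzX k q 1 * LiuSchulzX k q 2 from rfl,
      map_mul, map_mul, φ_x hq 0, φ_x hq 1, φ_x hq 2]
    rw [show gen q 0 = eL q 1 from rfl, show gen q 1 = eL q 2 from rfl,
      show gen q 2 = eL q 3 from rfl, e12]
    exact e43

/-- the linear map sending coordinates to the corresponding combination of monomials -/
noncomputable def ψl (q : k) : (Fin 8 → k) →ₗ[k] LiuSchulzAlgebra k q where
  toFun u := ∑ i, u i • mA q i
  map_add' u v := by simp [add_smul, Finset.sum_add_distrib]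
  map_smul' c u := by simp [smul_smul, Finset.smul_sum]

lemma sum_eL (u : LS8 k q) : (∑ i : Fin 8, u i • eL q i) = u := by
  refine lsext _ _ (fin8cases _ ?_ ?_ ?_ ?_ ?_ ?_ ?_ ?_) <;>
    simp [Fin.sum_univ_eight, add_apply, smul_apply, eL, zero_apply]

lemma φψ (hq : q ≠ 0) (u : Fin 8 → k) : φ q hq (ψl q u) = (u : Fin 8 → k) := by
  have h1 : φ q hq (ψl q u) = ∑ i, u i • eL q i := by
    simp [ψl, φ_m hq]
  rw [h1]
  exact sum_eL (q := q) u

lemma ψ_single : ∀ i : Fin 8, ψl q (Pi.single i 1) = mA q i := by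
  refine fin8cases _ ?_ ?_ ?_ ?_ ?_ ?_ ?_ ?_ <;>
    simp [ψl, Fin.sum_univ_eight, Pi.single_apply]

lemma ψ_inj (hq : q ≠ 0) : Function.Injective (ψl (k := k) q) := by
  intro u v h
  have h2 := congrArg (φ q hq) h
  rwa [φψ hq u, φψ hq v] at h2

lemma ψ_range (hq : q ≠ 0) : LinearMap.range (ψl (k := k) q) = ⊤ := by
  rw [← top_le_iff, ← span_m_top hq, Submodule.span_le]
  rintro v ⟨i, rfl⟩
  exact ⟨Pi.single i 1, ψ_single i⟩

lemma ψ_surj (hq : q ≠ 0) : Function.Surjective (ψl (k := k) q) := by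
  rw [← LinearMap.range_eq_top]
  exact ψ_range hq

lemma φ_bij (hq : q ≠ 0) : Function.Bijective (φ q hq : LiuSchulzAlgebra k q → LS8 k q) := by
  constructor
  · intro a b h
    obtain ⟨u, rfl⟩ := ψ_surj hq a
    obtain ⟨v, rfl⟩ := ψ_surj hq b
    rw [φψ hq u, φψ hq v] at h
    rw [h]
  · intro v
    exact ⟨ψl q v, φψ hq v⟩

end LiuSchulzAux

namespace LiuSchulzAux

variable {k : Type u} [Field k] {q : k}

lemma nil2 (a b : LS8 k q) (ha : a 0 = 0) (hb : b 0 = 0) :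
    (a * b) 0 = 0 ∧ (a * b) 1 = 0 ∧ (a * b) 2 = 0 ∧ (a * b) 3 = 0 := by
  refine ⟨?_, ?_, ?_, ?_⟩ <;> simp [mul0, mul1, mul2, mul3, ha, hb]

lemma nil3 (a b : LS8 k q) (ha0 : a 0 = 0) (ha1 : a 1 = 0) (ha2 : a 2 = 0) (ha3 : a 3 = 0)
    (hb : b 0 = 0) :
    (a * b) 0 = 0 ∧ (a * b) 1 = 0 ∧ (a * b) 2 = 0 ∧ (a * b) 3 = 0 ∧
    (a * b) 4 = 0 ∧ (a * b) 5 = 0 ∧ (a * b) 6 = 0 := by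
  refine ⟨?_, ?_, ?_, ?_, ?_, ?_, ?_⟩ <;>
    simp [mul0, mul1, mul2, mul3, mul4, mul5, mul6, ha0, ha1, ha2, ha3, hb]

lemma nil4 (a b : LS8 k q) (ha0 : a 0 = 0) (ha1 : a 1 = 0) (ha2 : a 2 = 0) (ha3 : a 3 = 0)
    (ha4 : a 4 = 0) (ha5 : a 5 = 0) (ha6 : a 6 = 0) (hb : b 0 = 0) : a * b = 0 := by
  refine lsext _ _ (fin8cases _ ?_ ?_ ?_ ?_ ?_ ?_ ?_ ?_) <;>
    simp [mul0, mul1, mul2, mul3, mul4, mul5, mul6, mul7, zero_apply,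
      ha0, ha1, ha2, ha3, ha4, ha5, ha6, hb]

lemma nilpotent_of (v : LS8 k q) (h : v 0 = 0) : v ^ 4 = 0 := by
  have h2 := nil2 v v h h
  have h3 := nil3 (v * v) v h2.1 h2.2.1 h2.2.2.1 h2.2.2.2 h
  have h4 := nil4 (v * v * v) v h3.1 h3.2.1 h3.2.2.1 h3.2.2.2.1 h3.2.2.2.2.1
    h3.2.2.2.2.2.1 h3.2.2.2.2.2.2 h
  calc v ^ 4 = v * v * v * v := by
        rw [show (4 : ℕ) = 2 + 1 + 1 from rfl, pow_succ, pow_succ, pow_two]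
    _ = 0 := h4

lemma isUnit_LS8 (v : LS8 k q) (h : v 0 ≠ 0) : IsUnit v := by
  have hn : (v - v 0 • 1 : LS8 k q) 0 = 0 := by
    simp [sub_apply, smul_apply, one_apply]
  have hnil : IsNilpotent (v - v 0 • 1) := ⟨4, nilpotent_of _ hn⟩
  have hu : IsUnit ((v 0) • (1 : LS8 k q)) := by
    refine ⟨⟨(v 0) • 1, (v 0)⁻¹ • 1, ?_, ?_⟩, rfl⟩
    · rw [smul_mul_assoc, one_mul, smul_smul, mul_inv_cancel₀ h, one_smul]
    · rw [smul_mul_assoc, one_mul, smul_smul, inv_mul_cancel₀ h, one_smul]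
  have hcomm : Commute (v - v 0 • 1) ((v 0) • (1 : LS8 k q)) := by
    show (v - v 0 • 1) * (v 0 • 1) = (v 0 • 1) * (v - v 0 • 1)
    rw [mul_smul_comm, smul_mul_assoc, one_mul, mul_one]
  have hres := hnil.isUnit_add_left_of_commute hu hcomm
  have he : v 0 • (1 : LS8 k q) + (v - v 0 • 1) = v := by abel
  rwa [he] at hres

lemma nontrivialA (hq : q ≠ 0) : Nontrivial (LiuSchulzAlgebra k q) := by
  refine ⟨1, 0, fun h => ?_⟩
  have h2 := congrArg (fun t => (φ q hq t) 0) h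
  simp only [map_one, map_zero] at h2
  rw [show ((1 : LS8 k q)) 0 = 1 from rfl, show ((0 : LS8 k q)) 0 = 0 from rfl] at h2
  exact one_ne_zero h2

end LiuSchulzAux

namespace LiuSchulzAux

variable {k : Type u} [Field k] {q : k}

lemma nontrivialLS8 : Nontrivial (LS8 k q) := by
  refine ⟨1, 0, fun h => ?_⟩
  have h2 : (1 : LS8 k q) 0 = (0 : LS8 k q) 0 := congrArg (fun t : LS8 k q => t 0) h
  exact one_ne_zero (α := k) h2

lemma unitA (hq : q ≠ 0) (a : LiuSchulzAlgebra k q) (h : IsUnit (φ q hq a)) : IsUnit a := by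
  let Φ := AlgEquiv.ofBijective (φ q hq) (φ_bij hq)
  have h3 : Φ.symm (φ q hq a) = a := Φ.symm_apply_apply a
  have h4 : IsUnit (Φ.symm (φ q hq a)) := h.map Φ.symm
  rwa [h3] at h4

lemma localA (hq : q ≠ 0) : IsLocalRing (LiuSchulzAlgebra k q) := by
  haveI := nontrivialA (q := q) hq
  haveI : Nontrivial (LS8 k q) := nontrivialLS8
  refine { toNontrivial := nontrivialA (q := q) hq, isUnit_or_isUnit_of_add_one := ?_ }
  intro a b hadd
  have hab : IsUnit (a + b) := by rw [hadd]; exact isUnit_one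
  by_cases h : (φ q hq a) 0 = 0
  · have hb0 : (φ q hq b) 0 ≠ 0 := by
      intro hb
      have h1 : (φ q hq (a + b)) 0 = 0 := by
        rw [map_add, add_apply, h, hb, add_zero]
      have h2 : IsNilpotent (φ q hq (a + b)) := ⟨4, nilpotent_of _ h1⟩
      exact (hab.map (φ q hq)).not_isNilpotent h2
    exact Or.inr (unitA hq b (isUnit_LS8 _ hb0))
  · exact Or.inl (unitA hq a (isUnit_LS8 _ h))

lemma top_symm (hq : q ≠ 0) (u v : LS8 k q) : (u * v) 7 = (v * u) 7 := by
  simp only [mul7, inv_mul_cancel₀ hq, mul_inv_cancel₀ hq, one_mul]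
  ring

lemma nondeg_aux (hq : q ≠ 0) (u : LS8 k q) (H : ∀ v : LS8 k q, (u * v) 7 = 0) : u = 0 := by
  have h0 := H (eL q 7)
  have h1 := H (eL q 5)
  have h2 := H (eL q 6)
  have h3 := H (eL q 4)
  have h4 := H (eL q 3)
  have h5 := H (eL q 1)
  have h6 := H (eL q 2)
  have h7 := H (eL q 0)
  simp [mul7, eL, hq, inv_mul_cancel₀ hq, mul_inv_cancel₀ hq, sub_eq_zero,
    add_eq_zero_iff_eq_neg] at h0 h1 h2 h3 h4 h5 h6 h7
  refine lsext _ _ (fin8cases _ ?_ ?_ ?_ ?_ ?_ ?_ ?_ ?_) <;>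
    rw [zero_apply] <;>
    first
      | exact h0 | exact h1 | exact h2 | exact h3
      | exact h4 | exact h5 | exact h6 | exact h7

end LiuSchulzAux


open LiuSchulzAux in
/-- The Liu-Schulz algebra (with `q ≠ 0` not a root of unity) is an 8-dimensional
local algebra, symmetric (it carries a nondegenerate symmetric associative bilinear form),
with `k`-basis `{1, x₀, x₁, x₂, x₀x₁, x₁x₂, x₀x₂, x₀x₁x₂}`. -/
theorem liuSchulz_8dim_local_symmetric (k : Type u) [Field k] (q : k) (hq : q ≠ 0)
    (hq' : ∀ m : ℕ, 0 < m → q ^ m ≠ 1) :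
    letI A := LiuSchulzAlgebra k q
    letI x := LiuSchulzX k q
    Module.finrank k A = 8 ∧
    (∃ b : Module.Basis (Fin 8) k A,
      b 0 = 1 ∧ b 1 = x 0 ∧ b 2 = x 1 ∧ b 3 = x 2 ∧
      b 4 = x 0 * x 1 ∧ b 5 = x 1 * x 2 ∧ b 6 = x 0 * x 2 ∧
      b 7 = x 0 * x 1 * x 2) ∧
    IsLocalRing A ∧
    -- `A` is symmetric: there is a nondegenerate symmetric associative bilinear form.
    (∃ B : LinearMap.BilinForm k A,
      (∀ a b c : A, B (a * b) c = B a (b * c)) ∧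
      (∀ a b : A, B a b = B b a) ∧
      (∀ a : A, (∀ b : A, B a b = 0) → a = 0)) := by
  let E : (Fin 8 → k) ≃ₗ[k] LiuSchulzAlgebra k q :=
    LinearEquiv.ofBijective (ψl q) ⟨ψ_inj hq, ψ_surj hq⟩
  let bA : Module.Basis (Fin 8) k (LiuSchulzAlgebra k q) := (Pi.basisFun k (Fin 8)).map E
  have hbA : ∀ i, bA i = mA q i := by
    intro i
    rw [show bA = (Pi.basisFun k (Fin 8)).map E from rfl, Module.Basis.map_apply, Pi.basisFun_apply]
    show E (Pi.single i 1) = mA q i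
    exact (LinearEquiv.ofBijective_apply (ψl q) (Pi.single i 1)).trans (ψ_single i)
  refine ⟨?_, ⟨bA, hbA 0, hbA 1, hbA 2, hbA 3, hbA 4, hbA 5, hbA 6, hbA 7⟩, localA hq, ?_⟩
  · rw [Module.finrank_eq_card_basis bA, Fintype.card_fin]
  · refine ⟨LinearMap.mk₂ k (fun a b => (φ q hq a * φ q hq b) 7)
      (fun a a' b => by beta_reduce; rw [map_add, add_mul, LiuSchulzAux.add_apply])
      (fun c a b => by beta_reduce; rw [map_smul, smul_mul_assoc, LiuSchulzAux.smul_apply]; rfl)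
      (fun a b b' => by beta_reduce; rw [map_add, mul_add, LiuSchulzAux.add_apply])
      (fun c a b => by beta_reduce; rw [map_smul, mul_smul_comm, LiuSchulzAux.smul_apply]; rfl), ?_, ?_, ?_⟩
    · intro a b c
      simp only [LinearMap.mk₂_apply]
      rw [map_mul, map_mul, mul_assoc]
    · intro a b
      simp only [LinearMap.mk₂_apply]
      exact top_symm hq _ _
    · intro a h
      have H : ∀ v : LS8 k q, (φ q hq a * v) 7 = 0 := by
        intro v
        obtain ⟨b, rfl⟩ := (φ_bij hq).2 v
        have := h b
        simpa only [LinearMap.mk₂_apply] using this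
      have hz : φ q hq a = 0 := nondeg_aux hq _ H
      exact (φ_bij hq).1 (by rw [hz, map_zero])
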